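/- Let U be a finite universe of size n and let S be a collection of subsets of U that is an (r, ℓ, ζ)-intersection disperser, with ℓ ≥ 2. Then for any collection F = {f_S}_{S∈S} of functions f_S : S → {0,1}, the two-level consistency graph G^{F,ζ} is ((rℓ)^{2(ℓ−1)}, ℓ)-red/blue-transitive. -/

import Mathlib

open Finset

/-- `disa S f i j`: the number of elements `x ∈ S i ∩ S j` on which the local
functions `f i` and `f j` disagree. -/
def disa {U ι : Type*} [DecidableEq U] (S : ι → Finset U) (f : ι → U → Bool) (i j : ι) : ℕ :=
  ((S i ∩ S j).filter fun x => f i x ≠ f j x).card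

/-- `IsBlueWalk Eb w`: consecutive vertices of `w` are joined by blue edges. -/
def IsBlueWalk {V : Type*} (Eb : V → V → Prop) {ℓ : ℕ} (w : Fin (ℓ + 1) → V) : Prop :=
  ∀ i : Fin ℓ, Eb (w i.castSucc) (w i.succ)

/-- `IsRedFilled Er w`: every pair of non-consecutive vertices of `w` is joined by a red
edge. -/
def IsRedFilled {V : Type*} (Er : V → V → Prop) {ℓ : ℕ} (w : Fin (ℓ + 1) → V) : Prop :=
  ∀ i j : Fin (ℓ + 1), (i : ℕ) + 1 < (j : ℕ) → Er (w i) (w j)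

/-- The set of red-filled `ℓ`-walks from `u` to `v`. -/
def RedFilledWalks {V : Type*} (Er Eb : V → V → Prop) (ℓ : ℕ) (u v : V) :
    Set (Fin (ℓ + 1) → V) :=
  {w | IsBlueWalk Eb w ∧ IsRedFilled Er w ∧ w 0 = u ∧ w (Fin.last ℓ) = v}

/-- `S` is an `(r, ℓ, η)`-intersection disperser. -/
def IsDisperser {U ι : Type*} [Fintype U] [DecidableEq U]
    (S : ι → Finset U) (r ℓ : ℕ) (η : ℝ) : Prop :=
  ∀ I : Fin r → Finset ι,
    (∀ a, (I a).Nonempty) →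
    (∀ a, (I a).card ≤ ℓ) →
    (Pairwise fun a b => Disjoint (I a) (I b)) →
    (1 - η) * (Fintype.card U : ℝ) ≤ ((Finset.univ.sup fun a => (I a).inf S).card : ℝ)

/- ---------------- auxiliary machinery ---------------- -/

lemma isBlueWalk_iff' {V : Type*} (Eb : V → V → Prop) {k : ℕ} (w : Fin (k+1) → V) :
    IsBlueWalk Eb w ↔ ∀ (i : ℕ) (_ : i + 1 ≤ k), Eb (w ⟨i, by omega⟩) (w ⟨i+1, by omega⟩) := by
  constructor
  · intro hb i h
    have := hb ⟨i, by omega⟩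
    convert this using 2 <;> exact Fin.ext (by simp)
  · intro hb i
    have := hb i.val (by omega)
    convert this using 2 <;> exact Fin.ext (by simp)

lemma isRedFilled_iff' {V : Type*} (Er : V → V → Prop) {k : ℕ} (w : Fin (k+1) → V) :
    IsRedFilled Er w ↔ ∀ (i j : ℕ) (_ : i + 1 < j) (_ : j ≤ k),
      Er (w ⟨i, by omega⟩) (w ⟨j, by omega⟩) := by
  constructor
  · intro hr i j hij hj
    exact hr ⟨i, by omega⟩ ⟨j, by omega⟩ (by simpa)
  · intro hr i j hij
    have := hr i.val j.val hij (by omega)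
    convert this using 2 <;> exact Fin.ext (by simp)

lemma apply_eq {V : Type*} {n : ℕ} (t : Fin n → V) (a b : Fin n) (h : (a : ℕ) = (b : ℕ)) :
    t a = t b := congrArg t (Fin.ext h)

open Classical in
/-- The red-filled walks from `u` to `v`, as a `Finset`. -/
noncomputable def WF {ι : Type*} [Fintype ι] (Er Eb : ι → ι → Prop) (k : ℕ) (u v : ι) :
    Finset (Fin (k+1) → ι) :=
  Finset.univ.filter (· ∈ RedFilledWalks Er Eb k u v)

lemma mem_WF {ι : Type*} [Fintype ι] {Er Eb : ι → ι → Prop} {k : ℕ} {u v : ι}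
    {w : Fin (k+1) → ι} :
    w ∈ WF Er Eb k u v ↔
      IsBlueWalk Eb w ∧ IsRedFilled Er w ∧ w 0 = u ∧ w (Fin.last k) = v := by
  simp only [WF, Finset.mem_filter, Finset.mem_univ, true_and]
  exact Iff.rfl

lemma coe_WF {ι : Type*} [Fintype ι] (Er Eb : ι → ι → Prop) (k : ℕ) (u v : ι) :
    RedFilledWalks Er Eb k u v = ↑(WF Er Eb k u v) := by
  ext w
  rw [Finset.mem_coe, mem_WF]
  rfl

lemma WF_card_one {ι : Type*} [Fintype ι] (Er Eb : ι → ι → Prop) (u v : ι) :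
    (WF Er Eb 1 u v).card ≤ 1 := by
  apply Finset.card_le_one.2
  intro a ha b hb
  rw [mem_WF] at ha hb
  funext j
  rcases Fin.eq_zero_or_eq_succ j with rfl | ⟨i, rfl⟩
  · rw [ha.2.2.1, hb.2.2.1]
  · have hi : i.succ = Fin.last 1 := by
      rw [Subsingleton.elim i 0]; rfl
    rw [hi, ha.2.2.2, hb.2.2.2]

lemma aux_hitting {α ι : Type*} [DecidableEq ι] (g : α → Finset ι) (m : ℕ)
    (hm : ∀ t, (g t).card ≤ m) :
    ∀ (r : ℕ) (T : Finset α),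
      (∃ W : Fin r → α, (∀ a, W a ∈ T) ∧
        (Pairwise fun a b => Disjoint (g (W a)) (g (W b)))) ∨
      (∃ X : Finset ι, X.card ≤ r * m ∧ ∀ t ∈ T, ¬ Disjoint X (g t)) := by
  intro r
  induction r with
  | zero =>
    intro T
    exact Or.inl ⟨Fin.elim0, fun a => a.elim0, fun a => a.elim0⟩
  | succ r IH =>
    intro T
    by_cases hT : T.Nonempty
    · obtain ⟨t₀, ht₀⟩ := hT
      set T' := T.filter (fun t => Disjoint (g t) (g t₀)) with hT'
      rcases IH T' with ⟨W, hW, hP⟩ | ⟨X, hX, hhit⟩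
      · refine Or.inl ⟨Fin.cons t₀ W, ?_, ?_⟩
        · intro a
          rcases Fin.eq_zero_or_eq_succ a with rfl | ⟨i, rfl⟩
          · simpa using ht₀
          · simpa using (Finset.mem_filter.1 (hW i)).1
        · intro a b hab
          rcases Fin.eq_zero_or_eq_succ a with rfl | ⟨i, rfl⟩ <;>
            rcases Fin.eq_zero_or_eq_succ b with rfl | ⟨j, rfl⟩
          · exact absurd rfl hab
          · simpa using ((Finset.mem_filter.1 (hW j)).2).symm
          · simpa using (Finset.mem_filter.1 (hW i)).2
          · have : i ≠ j := fun h => hab (by rw [h])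
            simpa using hP this
      · refine Or.inr ⟨X ∪ g t₀, ?_, ?_⟩
        · calc (X ∪ g t₀).card ≤ X.card + (g t₀).card := Finset.card_union_le _ _
            _ ≤ r * m + m := Nat.add_le_add hX (hm t₀)
            _ = (r+1) * m := by ring
        · intro t ht
          by_cases hd : Disjoint (g t) (g t₀)
          · have : t ∈ T' := Finset.mem_filter.2 ⟨ht, hd⟩
            intro hcon
            exact hhit t this (hcon.mono_left Finset.subset_union_left)
          · intro hcon
            obtain ⟨x, hx1, hx2⟩ := Finset.not_disjoint_iff.1 hd
            exact (Finset.disjoint_left.1 hcon (Finset.mem_union_right _ hx2)) hx1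
    · exact Or.inr ⟨∅, by simp, fun t ht => absurd ⟨t, ht⟩ hT⟩

section Main

variable {U ι : Type*} [Fintype U] [DecidableEq U] [Fintype ι] [DecidableEq ι]
  (S : ι → Finset U) (f : ι → U → Bool)

omit [Fintype U] [Fintype ι] [DecidableEq ι] in
lemma blue_agree {i j : ι} (h : disa S f i j = 0) {x : U} (hi : x ∈ S i) (hj : x ∈ S j) :
    f i x = f j x := by
  by_contra hne
  have h0 := Finset.card_eq_zero.mp h
  have hx : x ∈ (S i ∩ S j).filter fun x => f i x ≠ f j x :=
    Finset.mem_filter.2 ⟨Finset.mem_inter.2 ⟨hi, hj⟩, hne⟩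
  rw [h0] at hx
  exact absurd hx (Finset.notMem_empty x)

omit [Fintype U] [Fintype ι] [DecidableEq ι] in
lemma walk_agree {Eb : ι → ι → Prop} (hEb : ∀ i j, Eb i j → disa S f i j = 0)
    {k : ℕ} (w : Fin (k+1) → ι)
    (hb : IsBlueWalk Eb w)
    (x : U) (hx : ∀ i, x ∈ S (w i)) : f (w 0) x = f (w (Fin.last k)) x := by
  have key : ∀ i : Fin (k+1), f (w 0) x = f (w i) x := by
    intro i
    induction i using Fin.induction with
    | zero => rfl
    | succ i ih =>
      exact ih.trans (blue_agree S f (hEb _ _ (hb i)) (hx i.castSucc) (hx i.succ))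
  exact key (Fin.last k)

/-- interior of a walk, as a finset of vertices -/
def winterior {ι : Type*} [DecidableEq ι] {k : ℕ} (w : Fin (k+1) → ι) : Finset ι :=
  (Finset.Ioo (0 : Fin (k+1)) (Fin.last k)).image w

lemma no_disjoint {r ℓ : ℕ} {ζ : ℝ} (hdisp : IsDisperser S r ℓ ζ)
    {Eb : ι → ι → Prop} (hEb : ∀ i j, Eb i j → disa S f i j = 0)
    {k : ℕ} (hk2 : 2 ≤ k) (hkℓ : k ≤ ℓ) {u v : ι}
    (hred : ζ * (Fintype.card U : ℝ) < (disa S f u v : ℝ))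
    (W : Fin r → (Fin (k+1) → ι))
    (hblue : ∀ a, IsBlueWalk Eb (W a))
    (h0 : ∀ a, W a 0 = u) (hl : ∀ a, W a (Fin.last k) = v)
    (hdisj : Pairwise fun a b => Disjoint (winterior (W a)) (winterior (W b))) : False := by
  set n := Fintype.card U with hn
  have hone : (⟨1, by omega⟩ : Fin (k+1)) ∈ Finset.Ioo (0 : Fin (k+1)) (Fin.last k) := by
    rw [Finset.mem_Ioo]
    constructor <;> simp [Fin.lt_def] <;> omega
  have hcard := hdisp (fun a => winterior (W a))
    (fun a => ⟨W a ⟨1, by omega⟩, Finset.mem_image_of_mem _ hone⟩)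
    (fun a => by
      calc (winterior (W a)).card ≤ (Finset.Ioo (0 : Fin (k+1)) (Fin.last k)).card :=
            Finset.card_image_le
        _ ≤ ℓ := by rw [Fin.card_Ioo]; simp; omega)
    hdisj
  set D := (S u ∩ S v).filter fun x => f u x ≠ f v x with hD
  set G := (Finset.univ.sup fun a => (winterior (W a)).inf S) with hG
  have hDG : ¬ Disjoint D G := by
    intro hd
    have h1 : (D ∪ G).card ≤ n := by
      rw [hn]
      exact (Finset.card_le_card (Finset.subset_univ _)).trans (le_of_eq (Finset.card_univ))
    rw [Finset.card_union_of_disjoint hd] at h1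
    have h2 : (D.card : ℝ) + G.card ≤ (n : ℝ) := by exact_mod_cast h1
    have h3 : ζ * n < (D.card : ℝ) := hred
    nlinarith
  obtain ⟨x, hxD, hxG⟩ := Finset.not_disjoint_iff.1 hDG
  obtain ⟨a, -, hxa⟩ := Finset.mem_sup.1 hxG
  have hxuv := Finset.mem_filter.1 hxD
  have hxu : x ∈ S u := (Finset.mem_inter.1 hxuv.1).1
  have hxv : x ∈ S v := (Finset.mem_inter.1 hxuv.1).2
  have hxall : ∀ i : Fin (k+1), x ∈ S (W a i) := by
    intro i
    by_cases hi0 : i = 0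
    · rw [hi0, h0 a]; exact hxu
    by_cases hil : i = Fin.last k
    · rw [hil, hl a]; exact hxv
    · have : i ∈ Finset.Ioo (0 : Fin (k+1)) (Fin.last k) := by
        rw [Finset.mem_Ioo]
        exact ⟨lt_of_le_of_ne (Fin.zero_le i) (Ne.symm hi0), lt_of_le_of_ne (Fin.le_last i) hil⟩
      have : W a i ∈ winterior (W a) := Finset.mem_image_of_mem _ this
      exact (Finset.inf_le this : (winterior (W a)).inf S ≤ S (W a i)) hxa
  have := walk_agree S f hEb (W a) (hblue a) x hxall
  rw [h0 a, hl a] at this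
  exact hxuv.2 this

lemma count {r ℓ : ℕ} {ζ : ℝ} (hdisp : IsDisperser S r ℓ ζ)
    (Er Eb : ι → ι → Prop)
    (hEr : ∀ i j, Er i j → ζ * (Fintype.card U : ℝ) < (disa S f i j : ℝ))
    (hEb : ∀ i j, Eb i j → disa S f i j = 0) :
    ∀ k, 1 ≤ k → k ≤ ℓ → ∀ u v : ι,
      ζ * (Fintype.card U : ℝ) < (disa S f u v : ℝ) →
      (WF Er Eb k u v).card ≤ (r * ℓ) ^ (2 * (k - 1)) := by
  intro k
  induction k using Nat.strong_induction_on with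
  | _ k IH =>
  intro hk1 hkℓ u v hred
  rcases eq_or_lt_of_le hk1 with h1 | hk2
  · -- base case k = 1
    rw [← h1]
    simpa using WF_card_one Er Eb u v
  -- now 2 ≤ k
  rcases Nat.eq_zero_or_pos r with hr0 | hr
  · exfalso
    subst hr0
    exact no_disjoint S f hdisp hEb (by omega) hkℓ hred Fin.elim0
      (fun a => a.elim0) (fun a => a.elim0) (fun a => a.elim0)
      (fun a => a.elim0)
  have hIoo : (Finset.Ioo (0 : Fin (k+1)) (Fin.last k)).card = k - 1 := by
    rw [Fin.card_Ioo]; simp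
  have hpow2 : (r * ℓ) * (r * ℓ) * (r * ℓ) ^ (2 * (k - 2)) = (r * ℓ) ^ (2 * (k - 1)) := by
    rw [← sq, ← pow_add]
    congr 1
    omega
  have hstep : (r * (k - 1)) * (k - 1) ≤ (r * ℓ) * (r * ℓ) := by
    have hk1ℓ : k - 1 ≤ ℓ := by omega
    calc r * (k - 1) * (k - 1) ≤ r * ℓ * ℓ :=
          Nat.mul_le_mul (Nat.mul_le_mul_left r hk1ℓ) hk1ℓ
      _ ≤ (r * ℓ) * (r * ℓ) := Nat.mul_le_mul_left _ (Nat.le_mul_of_pos_left ℓ hr)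
  have hm : ∀ t : Fin (k+1) → ι, (winterior t).card ≤ k - 1 := by
    intro t
    calc (winterior t).card ≤ (Finset.Ioo (0 : Fin (k+1)) (Fin.last k)).card :=
          Finset.card_image_le
      _ = k - 1 := by rw [Fin.card_Ioo]; simp
  set T := WF Er Eb k u v with hT
  rcases aux_hitting winterior (k-1) hm r T with ⟨W, hW, hP⟩ | ⟨X, hX, hhit⟩
  · exfalso
    refine no_disjoint S f hdisp hEb (by omega) hkℓ hred W
      (fun a => (mem_WF.1 (hW a)).1)
      (fun a => (mem_WF.1 (hW a)).2.2.1)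
      (fun a => (mem_WF.1 (hW a)).2.2.2)
      hP
  -- hitting set case
  have hsub : T ⊆ (X ×ˢ Finset.Ioo (0 : Fin (k+1)) (Fin.last k)).biUnion
      (fun q => T.filter fun t => t q.2 = q.1) := by
    intro t ht
    obtain ⟨x, hxX, hxg⟩ := Finset.not_disjoint_iff.1 (hhit t ht)
    obtain ⟨p, hp, hpt⟩ := Finset.mem_image.1 hxg
    exact Finset.mem_biUnion.2
      ⟨(x, p), Finset.mem_product.2 ⟨hxX, hp⟩, Finset.mem_filter.2 ⟨ht, hpt⟩⟩
  have hfiber : ∀ q ∈ X ×ˢ Finset.Ioo (0 : Fin (k+1)) (Fin.last k),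
      (T.filter fun t => t q.2 = q.1).card ≤ (r * ℓ) ^ (2 * (k - 2)) := by
    rintro ⟨x, p⟩ hq
    show (T.filter fun t => t p = x).card ≤ (r * ℓ) ^ (2 * (k - 2))
    obtain ⟨-, hp⟩ := Finset.mem_product.1 hq
    rw [Finset.mem_Ioo] at hp
    have hp1 : 1 ≤ (p : ℕ) := by
      have h : (0 : Fin (k+1)) < p := hp.1
      have h' := Fin.lt_def.1 h
      simp only [Fin.val_zero] at h'
      omega
    have hpk : (p : ℕ) ≤ k - 1 := by
      have h := hp.2; simp [Fin.lt_def] at h; omega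
    by_cases hfe : (T.filter fun t => t p = x).Nonempty
    · obtain ⟨t₀, ht₀⟩ := hfe
      have ht₀T := (Finset.mem_filter.1 ht₀).1
      have ht₀p : t₀ p = x := (Finset.mem_filter.1 ht₀).2
      obtain ⟨hb₀, hr₀, h0₀, hl₀⟩ := mem_WF.1 ht₀T
      have hb1 : (WF Er Eb p.val u x).card ≤ (r * ℓ) ^ (2 * (p.val - 1)) := by
        rcases eq_or_lt_of_le hp1 with he | h2p
        · rw [← he]
          simpa using WF_card_one Er Eb u x
        · have hredux : Er u x := by
            have harg : ((0 : Fin (k+1)) : ℕ) + 1 < (p : ℕ) := by simp; omega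
            have := hr₀ 0 p harg
            rwa [h0₀, ht₀p] at this
          have ha1 : p.val < k := by omega
          have ha2 : 1 ≤ p.val := by omega
          have ha3 : p.val ≤ ℓ := by omega
          exact IH p.val ha1 ha2 ha3 u x (hEr _ _ hredux)
      have hb2 : (WF Er Eb (k - p.val) x v).card ≤ (r * ℓ) ^ (2 * (k - p.val - 1)) := by
        rcases Nat.lt_or_ge (p.val) (k - 1) with h2p | hge
        · have hredux : Er x v := by
            have harg : (p : ℕ) + 1 < ((Fin.last k : Fin (k+1)) : ℕ) := by
              rw [Fin.val_last]; omega
            have := hr₀ p (Fin.last k) harg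
            rwa [hl₀, ht₀p] at this
          have ha1 : k - p.val < k := by omega
          have ha2 : 1 ≤ k - p.val := by omega
          have ha3 : k - p.val ≤ ℓ := by omega
          exact IH (k - p.val) ha1 ha2 ha3 x v (hEr _ _ hredux)
        · have : k - p.val = 1 := by omega
          rw [this]
          simpa using WF_card_one Er Eb x v
      have hexp : (r * ℓ) ^ (2 * (p.val - 1)) * (r * ℓ) ^ (2 * (k - p.val - 1))
          = (r * ℓ) ^ (2 * (k - 2)) := by
        rw [← pow_add]
        congr 1
        omega
      have hc1 : p.val + 1 ≤ k + 1 := by omega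
      have hc2 : p.val + (k - p.val + 1) = k + 1 := by omega
      -- the splitting maps
      have key : (T.filter fun t => t p = x).card ≤
          (WF Er Eb p.val u x).card * (WF Er Eb (k - p.val) x v).card := by
        rw [← Finset.card_product]
        refine Finset.card_le_card_of_injOn
          (fun t => (fun j => t (Fin.castLE hc1 j),
                     fun j => t (Fin.cast hc2 (Fin.natAdd p.val j)))) ?_ ?_
        · intro t ht'
          have htT := (Finset.mem_filter.1 ht').1
          have htp : t p = x := (Finset.mem_filter.1 ht').2
          obtain ⟨hb, hrf, h0, hl⟩ := mem_WF.1 htT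
          rw [isBlueWalk_iff'] at hb
          rw [isRedFilled_iff'] at hrf
          refine Finset.mem_product.2 ⟨mem_WF.2 ⟨?_, ?_, ?_, ?_⟩, mem_WF.2 ⟨?_, ?_, ?_, ?_⟩⟩
          · rw [isBlueWalk_iff']
            intro i hi
            exact hb i (by omega)
          · rw [isRedFilled_iff']
            intro i j hij hj
            exact hrf i j hij (by omega)
          · refine (apply_eq t _ (0 : Fin (k+1)) ?_).trans h0
            simp
          · refine (apply_eq t _ p ?_).trans htp
            simp
          · rw [isBlueWalk_iff']
            intro i hi
            exact hb (p.val + i) (by omega)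
          · rw [isRedFilled_iff']
            intro i j hij hj
            exact hrf (p.val + i) (p.val + j) (by omega) (by omega)
          · refine (apply_eq t _ p ?_).trans htp
            simp
          · refine (apply_eq t _ (Fin.last k) ?_).trans hl
            simp only [Fin.coe_cast, Fin.coe_natAdd, Fin.val_last]
            omega
        · intro t1 h1 t2 h2 heq
          funext j
          by_cases hj : (j : ℕ) ≤ (p : ℕ)
          · exact congrFun (congrArg Prod.fst heq) ⟨j.val, by omega⟩
          · have hcf := congrFun (congrArg Prod.snd heq) ⟨j.val - p.val, by have := j.isLt; omega⟩
            have ej : j = (⟨p.val + (j.val - p.val), by have := j.isLt; omega⟩ : Fin (k+1)) := by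
              apply Fin.ext
              show (j : ℕ) = p.val + (j.val - p.val)
              omega
            rw [ej]
            exact hcf
      calc (T.filter fun t => t p = x).card
          ≤ (WF Er Eb p.val u x).card * (WF Er Eb (k - p.val) x v).card := key
        _ ≤ (r * ℓ) ^ (2 * (p.val - 1)) * (r * ℓ) ^ (2 * (k - p.val - 1)) :=
            Nat.mul_le_mul hb1 hb2
        _ = (r * ℓ) ^ (2 * (k - 2)) := hexp
    · rw [Finset.not_nonempty_iff_eq_empty.1 hfe]
      simp
  calc T.card ≤ ((X ×ˢ Finset.Ioo (0 : Fin (k+1)) (Fin.last k)).biUnion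
        (fun q => T.filter fun t => t q.2 = q.1)).card := Finset.card_le_card hsub
    _ ≤ (X ×ˢ Finset.Ioo (0 : Fin (k+1)) (Fin.last k)).card * (r * ℓ) ^ (2 * (k - 2)) :=
        Finset.card_biUnion_le_card_mul _ _ _ hfiber
    _ ≤ (r * (k - 1)) * (k - 1) * (r * ℓ) ^ (2 * (k - 2)) := by
        apply Nat.mul_le_mul_right
        rw [Finset.card_product, hIoo]
        exact Nat.mul_le_mul_right _ hX
    _ ≤ ((r * ℓ) * (r * ℓ)) * (r * ℓ) ^ (2 * (k - 2)) := Nat.mul_le_mul_right _ hstep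
    _ = (r * ℓ) ^ (2 * (k - 1)) := hpow2

end Main

/-- If `S` is an `(r, ℓ, ζ)`-intersection disperser with `ℓ ≥ 2`, then for any collection
of local functions `f`, the two-level consistency graph `G^{F,ζ}` (blue edges = consistent
pairs, red edges = `ζ`-inconsistent pairs) is `((rℓ)^{2(ℓ-1)}, ℓ)`-red/blue-transitive:
for every red edge `{u, v}` there are at most `(rℓ)^{2(ℓ-1)}` red-filled `ℓ`-walks from
`u` to `v`. -/
theorem stmt2 {U ι : Type*} [Fintype U] [DecidableEq U] [Fintype ι] [DecidableEq ι]
    (S : ι → Finset U) (f : ι → U → Bool) (r ℓ : ℕ) (ζ : ℝ)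
    (hζ0 : 0 ≤ ζ) (hζ1 : ζ ≤ 1) (hℓ : 2 ≤ ℓ)
    (hdisp : IsDisperser S r ℓ ζ) :
    ∀ u v : ι, u ≠ v → ζ * (Fintype.card U : ℝ) < (disa S f u v : ℝ) →
      (RedFilledWalks
          (fun i j => i ≠ j ∧ ζ * (Fintype.card U : ℝ) < (disa S f i j : ℝ))
          (fun i j => i ≠ j ∧ disa S f i j = 0) ℓ u v).ncard ≤ (r * ℓ) ^ (2 * (ℓ - 1)) := by
  intro u v huv hred
  rw [coe_WF, Set.ncard_coe_finset]
  exact count S f hdisp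
    (fun i j => i ≠ j ∧ ζ * (Fintype.card U : ℝ) < (disa S f i j : ℝ))
    (fun i j => i ≠ j ∧ disa S f i j = 0)
    (fun i j h => h.2) (fun i j h => h.2)
    ℓ (by omega) le_rfl u v hred
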